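/- Bivariate Rayleigh monotonicity: for two jointly complex Gaussian random variables g₁, g₂ each ~ CN(0,1) with cross-correlation E[g₁ḡ₂] = ρ where 0 ≤ |ρ| < 1, the joint CDF P(|g₁|² ≤ t, |g₂|² ≤ t) is a nondecreasing function of |ρ|² for each fixed t > 0. -/

import Mathlib

open Real MeasureTheory

/-- Joint density of two jointly circularly-symmetric complex Gaussian variables
`g₁, g₂ ~ CN(0,1)` with cross-correlation `E[g₁ ḡ₂] = ρ`, `|ρ| < 1`. -/
noncomputable def cgDensity (ρ : ℂ) (z : ℂ × ℂ) : ℝ :=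
  (1 / (π^2 * (1 - ‖ρ‖^2))) *
    Real.exp (-((‖z.1‖^2 + ‖z.2‖^2 -
      2 * ((starRingEnd ℂ) ρ * z.1 * (starRingEnd ℂ) z.2).re) /
        (1 - ‖ρ‖^2)))

/-- Joint CDF `P(|g₁|² ≤ t, |g₂|² ≤ t)` of the squared envelopes. -/
noncomputable def jointCDF (ρ : ℂ) (t : ℝ) : ℝ :=
  ∫ z in {p : ℂ × ℂ | ‖p.1‖^2 ≤ t ∧ ‖p.2‖^2 ≤ t}, cgDensity ρ z

section Aux
open Complex ENNReal

lemma lint_gauss1 (a : ℝ) (ha : 0 < a) : ∫⁻ x : ℝ, ENNReal.ofReal (rexp (-(a * x^2))) = ENNReal.ofReal (Real.sqrt (π/a)) := by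
  rw [← ofReal_integral_eq_lintegral_ofReal]
  · congr 1
    simpa [neg_mul] using integral_gaussian a
  · simpa [neg_mul] using integrable_exp_neg_mul_sq ha
  · exact Filter.Eventually.of_forall fun x => (Real.exp_pos _).le

lemma lint_gauss1' (a b : ℝ) (ha : 0 < a) :
    ∫⁻ x : ℝ, ENNReal.ofReal (rexp (-(a * x^2) + b * x))
      = ENNReal.ofReal (Real.sqrt (π/a) * rexp (b^2/(4*a))) := by
  have key : ∀ x : ℝ, rexp (-(a * x^2) + b * x)
      = rexp (b^2/(4*a)) * rexp (-(a * (x - b/(2*a))^2)) := by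
    intro x
    rw [← Real.exp_add]
    congr 1
    field_simp
    ring
  simp_rw [key, ENNReal.ofReal_mul (Real.exp_pos _).le]
  rw [lintegral_const_mul' _ _ ofReal_ne_top,
    lintegral_sub_right_eq_self (fun x => ENNReal.ofReal (rexp (-(a * x^2)))) (b/(2*a)),
    lint_gauss1 a ha, ← ENNReal.ofReal_mul (Real.exp_pos _).le, mul_comm]

lemma lint_gauss2 (a b1 b2 K : ℝ) (ha : 0 < a) (hK : 0 ≤ K) :
    ∫⁻ u : ℂ, ENNReal.ofReal (K * rexp (-(a * Complex.normSq u) + b1 * u.re + b2 * u.im))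
      = ENNReal.ofReal (K * ((π/a) * rexp ((b1^2 + b2^2)/(4*a)))) := by
  have hcont : Continuous fun u : ℂ => K * rexp (-(a * Complex.normSq u) + b1 * u.re + b2 * u.im) := by
    continuity
  have hmeas : Measurable fun u : ℂ =>
      ENNReal.ofReal (K * rexp (-(a * Complex.normSq u) + b1 * u.re + b2 * u.im)) :=
    hcont.measurable.ennreal_ofReal
  rw [← MeasurePreserving.lintegral_comp
    (Complex.volume_preserving_equiv_real_prod.symm Complex.measurableEquivRealProd) hmeas]
  have key : ∀ p : ℝ × ℝ,
      ENNReal.ofReal (K * rexp (-(a * Complex.normSq (Complex.measurableEquivRealProd.symm p))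
          + b1 * (Complex.measurableEquivRealProd.symm p).re
          + b2 * (Complex.measurableEquivRealProd.symm p).im))
      = ENNReal.ofReal K * ((fun x : ℝ => ENNReal.ofReal (rexp (-(a * x^2) + b1 * x))) p.1
          * (fun y : ℝ => ENNReal.ofReal (rexp (-(a * y^2) + b2 * y))) p.2) := by
    intro p
    simp only []
    rw [← ENNReal.ofReal_mul (Real.exp_pos _).le, ← ENNReal.ofReal_mul hK, ← Real.exp_add]
    congr 2
    rw [Complex.normSq_apply]
    simp [Complex.measurableEquivRealProd_symm_apply]
    ring
  simp_rw [key]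
  have hf1 : AEMeasurable (fun x : ℝ => ENNReal.ofReal (rexp (-(a * x^2) + b1 * x))) volume := by
    apply Measurable.aemeasurable
    exact (Continuous.measurable (by continuity)).ennreal_ofReal
  have hf2 : AEMeasurable (fun y : ℝ => ENNReal.ofReal (rexp (-(a * y^2) + b2 * y))) volume := by
    apply Measurable.aemeasurable
    exact (Continuous.measurable (by continuity)).ennreal_ofReal
  rw [lintegral_const_mul' _ _ ofReal_ne_top, Measure.volume_eq_prod ℝ ℝ,
    lintegral_prod_mul hf1 hf2, lint_gauss1' a b1 ha, lint_gauss1' a b2 ha,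
    ← ENNReal.ofReal_mul (by positivity), ← ENNReal.ofReal_mul hK]
  congr 1
  congr 1
  have : Real.sqrt (π/a) * Real.sqrt (π/a) = π/a := Real.mul_self_sqrt (le_of_lt (div_pos pi_pos ha))
  calc Real.sqrt (π/a) * rexp (b1^2/(4*a)) * (Real.sqrt (π/a) * rexp (b2^2/(4*a)))
      = (Real.sqrt (π/a) * Real.sqrt (π/a)) * (rexp (b1^2/(4*a)) * rexp (b2^2/(4*a))) := by ring
    _ = π/a * rexp (b1^2/(4*a) + b2^2/(4*a)) := by rw [this, Real.exp_add]
    _ = π/a * rexp ((b1^2+b2^2)/(4*a)) := by rw [← add_div]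

lemma lint_canon {f : ℂ → ℝ≥0∞} (a b1 b2 K : ℝ) (ha : 0 < a) (hK : 0 ≤ K)
    (hf : ∀ u, f u = ENNReal.ofReal (K * rexp (-(a * Complex.normSq u) + b1 * u.re + b2 * u.im))) :
    ∫⁻ u : ℂ, f u = ENNReal.ofReal (K * ((π/a) * rexp ((b1^2 + b2^2)/(4*a)))) := by
  calc ∫⁻ u : ℂ, f u
      = ∫⁻ u : ℂ, ENNReal.ofReal (K * rexp (-(a * Complex.normSq u) + b1 * u.re + b2 * u.im)) := by
        congr 1; funext u; exact hf u
    _ = _ := lint_gauss2 a b1 b2 K ha hK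

noncomputable def gk (v : ℝ) (z : ℂ) : ℝ≥0∞ :=
  ENNReal.ofReal ((π*v)⁻¹ * rexp (-(Complex.normSq z)/v))

lemma mulexp (A B E F : ℝ) : (A * rexp E) * (B * rexp F) = (A*B) * rexp (E+F) := by
  rw [Real.exp_add]; ring

lemma expmul (A E F : ℝ) : (A * rexp E) * rexp F = A * rexp (E+F) := by
  rw [Real.exp_add, mul_assoc]

lemma gk_mass {v : ℝ} (hv : 0 < v) (c : ℂ) : ∫⁻ u : ℂ, gk v (u - c) = 1 := by
  have hπ := pi_pos
  rw [lint_canon v⁻¹ (2*c.re/v) (2*c.im/v) ((π*v)⁻¹ * rexp (-(Complex.normSq c)/v))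
    (inv_pos.mpr hv) (by positivity)]
  · rw [← ENNReal.ofReal_one]
    congr 1
    rw [mul_comm ((π*v)⁻¹ * rexp (-(Complex.normSq c)/v)), mul_assoc, ← mul_assoc (rexp _),
      mul_comm (rexp _), mul_assoc, ← Real.exp_add]
    have h1 : ((2*c.re/v)^2 + (2*c.im/v)^2)/(4*v⁻¹) + -(Complex.normSq c)/v = 0 := by
      rw [Complex.normSq_apply]
      field_simp
      ring
    rw [h1, Real.exp_zero, mul_one]
    field_simp
  · intro u
    unfold gk
    congr 1
    rw [mul_assoc, ← Real.exp_add]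
    congr 1
    simp only [Complex.normSq_apply, Complex.sub_re, Complex.sub_im]
    field_simp
    ring

lemma gk_conv {p q : ℝ} (hp : 0 < p) (hq : 0 < q) (c1 c2 : ℂ) :
    ∫⁻ u : ℂ, gk p (u - c1) * gk q (c2 - u) = gk (p+q) (c2 - c1) := by
  have hπ := pi_pos
  have hpq : (0:ℝ) < p + q := by linarith
  rw [lint_canon (p⁻¹ + q⁻¹) (2*c1.re/p + 2*c2.re/q) (2*c1.im/p + 2*c2.im/q)
      ((π*p)⁻¹ * (π*q)⁻¹ * rexp (-(Complex.normSq c1)/p + -(Complex.normSq c2)/q))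
      (by positivity) (by positivity)]
  · unfold gk
    congr 1
    rw [mulexp]
    congr 1
    · field_simp
      ring
    · congr 1
      simp only [Complex.normSq_apply, Complex.sub_re, Complex.sub_im]
      field_simp
      ring
  · intro u
    unfold gk
    rw [← ENNReal.ofReal_mul (by positivity)]
    congr 1
    rw [mulexp, expmul]
    congr 1
    simp only [Complex.normSq_apply, Complex.sub_re, Complex.sub_im]
    field_simp
    ring

lemma cgDensity_real (s : ℝ) (hs0 : 0 ≤ s) (z1 z2 : ℂ) :
    cgDensity (s:ℂ) (z1, z2) = (1/(π^2*(1-s^2))) *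
      rexp (-((Complex.normSq z1 + Complex.normSq z2
        - 2*(s*(z1.re*z2.re + z1.im*z2.im)))/(1-s^2))) := by
  unfold cgDensity
  have h1 : ‖(s:ℂ)‖ = s := Complex.norm_of_nonneg hs0
  rw [h1]
  congr 2
  congr 1
  simp only [Complex.sq_norm, Complex.mul_re, Complex.mul_im, Complex.conj_re, Complex.conj_im,
    Complex.ofReal_re, Complex.ofReal_im, Complex.conj_ofReal]
  ring

lemma gk_triple {s : ℝ} (hs : 0 < s) (hs1 : s < 1) (z1 z2 : ℂ) :
    ∫⁻ u : ℂ, gk s u * (gk (1-s) (z1 - u) * gk (1-s) (z2 - u))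
      = ENNReal.ofReal (cgDensity (s:ℂ) (z1, z2)) := by
  have hπ := pi_pos
  have hv : (0:ℝ) < 1 - s := by linarith
  have hv' : (1:ℝ) - s ≠ 0 := hv.ne'
  have hs' : s ≠ 0 := hs.ne'
  have hss : (0:ℝ) < 1 - s^2 := by nlinarith
  have hss' : (1:ℝ) - s^2 ≠ 0 := hss.ne'
  rw [lint_canon (s⁻¹ + 2*(1-s)⁻¹) (2*z1.re/(1-s) + 2*z2.re/(1-s)) (2*z1.im/(1-s) + 2*z2.im/(1-s))
      ((π*s)⁻¹ * (π*(1-s))⁻¹ * (π*(1-s))⁻¹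
        * rexp (-(Complex.normSq z1)/(1-s) + -(Complex.normSq z2)/(1-s)))
      (by positivity) (by positivity)]
  · rw [cgDensity_real s hs.le]
    congr 1
    rw [mulexp]
    congr 1
    · field_simp
      ring
    · congr 1
      simp only [Complex.normSq_apply]
      field_simp
      ring
  · intro u
    unfold gk
    rw [← ENNReal.ofReal_mul (by positivity), ← ENNReal.ofReal_mul (by positivity)]
    congr 1
    rw [mulexp, mulexp, expmul]
    congr 1
    · ring
    · congr 1
      simp only [Complex.normSq_apply, Complex.sub_re, Complex.sub_im]
      field_simp
      ring

lemma gk_ne_top (v : ℝ) (z : ℂ) : gk v z ≠ ⊤ := ENNReal.ofReal_ne_top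

lemma gk_meas (v : ℝ) : Measurable (gk v) := by
  apply Measurable.ennreal_ofReal
  apply Continuous.measurable
  continuity

def Dset (t : ℝ) : Set ℂ := {z : ℂ | ‖z‖^2 ≤ t}

lemma measurableSet_Dset (t : ℝ) : MeasurableSet (Dset t) := by
  have hc : Continuous fun z : ℂ => ‖z‖^2 := by continuity
  exact measurableSet_le hc.measurable measurable_const

noncomputable def Rl (t v : ℝ) (c : ℂ) : ℝ≥0∞ := ∫⁻ z in Dset t, gk v (z - c)

lemma Rl_eq_indicator (t v : ℝ) (c : ℂ) :
    Rl t v c = ∫⁻ z : ℂ, (Dset t).indicator (fun z => gk v (z - c)) z := by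
  rw [Rl, lintegral_indicator (measurableSet_Dset t)]

lemma meas_Rl (t v : ℝ) : Measurable (Rl t v) := by
  have h : Measurable (fun p : ℂ × ℂ => (Dset t).indicator (fun z => gk v (z - p.1)) p.2) := by
    have he : (fun p : ℂ × ℂ => (Dset t).indicator (fun z => gk v (z - p.1)) p.2)
        = (Set.univ ×ˢ Dset t).indicator (fun p : ℂ × ℂ => gk v (p.2 - p.1)) := by
      funext p
      by_cases hp : p.2 ∈ Dset t <;>
        simp [Set.indicator, hp]
    rw [he]
    exact (((gk_meas v).comp (by fun_prop)).indicator
      (MeasurableSet.univ.prod (measurableSet_Dset t)))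
  have h2 : Measurable fun c : ℂ =>
      ∫⁻ z : ℂ, (Dset t).indicator (fun z => gk v (z - c)) z := h.lintegral_prod_right'
  simpa [← Rl_eq_indicator] using h2

lemma Rl_kernel {a b : ℝ} (ha : 0 < a) (hb : 0 < b) (t : ℝ) (c : ℂ) :
    Rl t (a+b) c = ∫⁻ w : ℂ, gk a (w - c) * Rl t b w := by
  symm
  have hmeasF : Measurable (Function.uncurry fun w z : ℂ =>
      gk a (w - c) * (Dset t).indicator (fun z => gk b (z - w)) z) := by
    have he : (Function.uncurry fun w z : ℂ =>
        gk a (w - c) * (Dset t).indicator (fun z => gk b (z - w)) z)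
        = fun p : ℂ × ℂ => gk a (p.1 - c)
            * (Set.univ ×ˢ Dset t).indicator (fun p : ℂ × ℂ => gk b (p.2 - p.1)) p := by
      funext p
      by_cases hp : p.2 ∈ Dset t <;>
        simp [Function.uncurry, Set.indicator, hp]
    rw [he]
    exact ((gk_meas a).comp (by fun_prop)).mul
      (((gk_meas b).comp (by fun_prop)).indicator
        (MeasurableSet.univ.prod (measurableSet_Dset t)))
  calc ∫⁻ w : ℂ, gk a (w - c) * Rl t b w
      = ∫⁻ w : ℂ, ∫⁻ z : ℂ, gk a (w - c) * (Dset t).indicator (fun z => gk b (z - w)) z := by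
        congr 1; funext w
        rw [Rl_eq_indicator, ← lintegral_const_mul' _ _ (gk_ne_top a (w - c))]
    _ = ∫⁻ z : ℂ, ∫⁻ w : ℂ, gk a (w - c) * (Dset t).indicator (fun z => gk b (z - w)) z :=
        lintegral_lintegral_swap hmeasF.aemeasurable
    _ = ∫⁻ z : ℂ, (Dset t).indicator (fun z => gk (a+b) (z - c)) z := by
        congr 1; funext z
        by_cases hz : z ∈ Dset t
        · simp only [Set.indicator_of_mem hz]
          exact gk_conv ha hb c z
        · simp only [Set.indicator_of_notMem hz, mul_zero, lintegral_zero]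
    _ = Rl t (a+b) c := (Rl_eq_indicator t (a+b) c).symm

lemma prod_split {v : ℝ} (t : ℝ) (u : ℂ) :
    ∫⁻ z in (Dset t) ×ˢ (Dset t), gk v (z.1 - u) * gk v (z.2 - u) = (Rl t v u)^2 := by
  have h1 : AEMeasurable (fun z : ℂ => gk v (z - u)) (volume.restrict (Dset t)) :=
    ((gk_meas v).comp (by fun_prop)).aemeasurable
  rw [Measure.volume_eq_prod ℂ ℂ, ← Measure.prod_restrict, lintegral_prod_mul h1 h1, sq]
  rfl

lemma L_repr {s : ℝ} (hs : 0 < s) (hs1 : s < 1) (t : ℝ) :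
    ∫⁻ z in (Dset t) ×ˢ (Dset t), ENNReal.ofReal (cgDensity (s:ℂ) z)
      = ∫⁻ u : ℂ, gk s u * (Rl t (1-s) u)^2 := by
  have hS : MeasurableSet ((Dset t) ×ˢ (Dset t)) :=
    (measurableSet_Dset t).prod (measurableSet_Dset t)
  have hmeasF : Measurable (Function.uncurry fun z : ℂ × ℂ => fun u : ℂ =>
      ((Dset t) ×ˢ (Dset t)).indicator
        (fun z => gk s u * (gk (1-s) (z.1 - u) * gk (1-s) (z.2 - u))) z) := by
    have he : (Function.uncurry fun z : ℂ × ℂ => fun u : ℂ =>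
        ((Dset t) ×ˢ (Dset t)).indicator
          (fun z => gk s u * (gk (1-s) (z.1 - u) * gk (1-s) (z.2 - u))) z)
        = (((Dset t) ×ˢ (Dset t)) ×ˢ (Set.univ : Set ℂ)).indicator
          (fun p : (ℂ × ℂ) × ℂ =>
            gk s p.2 * (gk (1-s) (p.1.1 - p.2) * gk (1-s) (p.1.2 - p.2))) := by
      funext p
      by_cases hp : p.1 ∈ (Dset t) ×ˢ (Dset t) <;>
        simp [Function.uncurry, Set.indicator, hp]
    rw [he]
    exact (((gk_meas s).comp (by fun_prop)).mul
      ((((gk_meas (1-s)).comp (by fun_prop))).mul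
        (((gk_meas (1-s)).comp (by fun_prop))))).indicator
      (hS.prod MeasurableSet.univ)
  calc ∫⁻ z in (Dset t) ×ˢ (Dset t), ENNReal.ofReal (cgDensity (s:ℂ) z)
      = ∫⁻ z in (Dset t) ×ˢ (Dset t),
          ∫⁻ u : ℂ, gk s u * (gk (1-s) (z.1 - u) * gk (1-s) (z.2 - u)) := by
        refine lintegral_congr fun z => ?_
        rw [gk_triple hs hs1 z.1 z.2]
    _ = ∫⁻ z : ℂ × ℂ, ∫⁻ u : ℂ, ((Dset t) ×ˢ (Dset t)).indicator
          (fun z => gk s u * (gk (1-s) (z.1 - u) * gk (1-s) (z.2 - u))) z := by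
        rw [← lintegral_indicator hS]
        refine lintegral_congr fun z => ?_
        by_cases hz : z ∈ (Dset t) ×ˢ (Dset t) <;>
          simp [Set.indicator, hz]
    _ = ∫⁻ u : ℂ, ∫⁻ z : ℂ × ℂ, ((Dset t) ×ˢ (Dset t)).indicator
          (fun z => gk s u * (gk (1-s) (z.1 - u) * gk (1-s) (z.2 - u))) z :=
        lintegral_lintegral_swap hmeasF.aemeasurable
    _ = ∫⁻ u : ℂ, gk s u * (Rl t (1-s) u)^2 := by
        refine lintegral_congr fun u => ?_
        rw [lintegral_indicator hS, lintegral_const_mul' _ _ (gk_ne_top s u),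
          prod_split t u]

lemma L0_repr (t : ℝ) :
    ∫⁻ z in (Dset t) ×ˢ (Dset t), ENNReal.ofReal (cgDensity ((0:ℝ):ℂ) z)
      = (Rl t 1 0)^2 := by
  have key : ∀ z : ℂ × ℂ, ENNReal.ofReal (cgDensity ((0:ℝ):ℂ) z)
      = gk 1 (z.1 - 0) * gk 1 (z.2 - 0) := by
    intro z
    have := cgDensity_real 0 le_rfl z.1 z.2
    rw [Prod.mk.eta] at this
    rw [this]
    unfold gk
    rw [← ENNReal.ofReal_mul (by positivity)]
    congr 1
    simp only [sub_zero]
    rw [mulexp]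
    have hπ := Real.pi_pos
    congr 1
    · field_simp
      ring
    · ring
  calc ∫⁻ z in (Dset t) ×ˢ (Dset t), ENNReal.ofReal (cgDensity ((0:ℝ):ℂ) z)
      = ∫⁻ z in (Dset t) ×ˢ (Dset t), gk 1 (z.1 - 0) * gk 1 (z.2 - 0) :=
        lintegral_congr fun z => key z
    _ = (Rl t 1 0)^2 := prod_split t 0

lemma lint_CS {w g : ℂ → ℝ≥0∞} (hw : Measurable w) (hg : Measurable g)
    (hmass : ∫⁻ u, w u = 1) :
    (∫⁻ u, w u * g u) ^ 2 ≤ ∫⁻ u, w u * (g u) ^ 2 := by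
  have hpq : Real.HolderConjugate 2 2 := ⟨by norm_num, by norm_num, by norm_num⟩
  have hsq : ∀ x : ℝ≥0∞, (x ^ (1/2:ℝ)) ^ (2:ℝ) = x := by
    intro x
    rw [← ENNReal.rpow_mul]
    norm_num
  have key := ENNReal.lintegral_mul_le_Lp_mul_Lq volume hpq
    (f := fun u => (w u) ^ (1/2 : ℝ) * g u) (g := fun u => (w u) ^ (1/2 : ℝ))
    ((hw.pow_const _).mul hg).aemeasurable (hw.pow_const _).aemeasurable
  simp only [Pi.mul_apply] at key
  have e0 : ∀ u, (w u) ^ (1/2:ℝ) * g u * (w u) ^ (1/2:ℝ) = w u * g u := by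
    intro u
    have : (w u) ^ (1/2 : ℝ) * (w u) ^ (1/2 : ℝ) = w u := by
      rw [← ENNReal.rpow_add_of_nonneg _ _ (by norm_num) (by norm_num)]
      norm_num
    calc (w u) ^ (1/2:ℝ) * g u * (w u) ^ (1/2:ℝ)
        = ((w u) ^ (1/2:ℝ) * (w u) ^ (1/2:ℝ)) * g u := by ring
      _ = w u * g u := by rw [this]
  have e1 : ∀ u, ((w u) ^ (1/2:ℝ) * g u) ^ (2:ℝ) = w u * (g u) ^ 2 := by
    intro u
    rw [ENNReal.mul_rpow_of_nonneg _ _ (by norm_num), hsq]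
    congr 1
    rw [← ENNReal.rpow_natCast (g u) 2]
    norm_num
  have e2 : ∀ u, ((w u) ^ (1/2:ℝ)) ^ (2:ℝ) = w u := fun u => hsq _
  simp only [e0, e1, e2] at key
  rw [hmass, ENNReal.one_rpow, mul_one] at key
  calc (∫⁻ u, w u * g u) ^ 2 ≤ ((∫⁻ u, w u * (g u)^2) ^ (1/2:ℝ)) ^ 2 := by
        exact pow_le_pow_left' key 2
    _ = ∫⁻ u, w u * (g u)^2 := by
        rw [← ENNReal.rpow_natCast (_ ^ (1/2:ℝ)) 2, ← ENNReal.rpow_mul]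
        norm_num

lemma L_mono (t : ℝ) {s1 s2 : ℝ} (h0 : 0 ≤ s1) (h12 : s1 ≤ s2) (hs2 : s2 < 1) :
    ∫⁻ z in (Dset t) ×ˢ (Dset t), ENNReal.ofReal (cgDensity ((s1:ℝ):ℂ) z)
      ≤ ∫⁻ z in (Dset t) ×ˢ (Dset t), ENNReal.ofReal (cgDensity ((s2:ℝ):ℂ) z) := by
  rcases eq_or_lt_of_le h12 with heq | hlt
  · rw [heq]
  have hs2pos : 0 < s2 := lt_of_le_of_lt h0 hlt
  have hv2 : (0:ℝ) < 1 - s2 := by linarith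
  rcases eq_or_lt_of_le h0 with h1 | hs1pos
  · -- s1 = 0
    rw [← h1, L0_repr t, L_repr hs2pos hs2 t]
    have hker : Rl t 1 0 = ∫⁻ u : ℂ, gk s2 (u - 0) * Rl t (1-s2) u := by
      have h := Rl_kernel hs2pos hv2 t 0
      rw [show s2 + (1-s2) = 1 by ring] at h
      exact h
    rw [hker]
    have hCS := lint_CS (w := fun u : ℂ => gk s2 (u - 0)) (g := Rl t (1-s2))
      ((gk_meas s2).comp (by fun_prop)) (meas_Rl t (1-s2)) (gk_mass hs2pos 0)
    simpa [sub_zero] using hCS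
  · -- 0 < s1
    have hs1lt : s1 < 1 := lt_trans hlt hs2
    have hd : (0:ℝ) < s2 - s1 := sub_pos.mpr hlt
    rw [L_repr hs1pos hs1lt t, L_repr hs2pos hs2 t]
    have hker : ∀ u : ℂ, Rl t (1-s1) u = ∫⁻ v : ℂ, gk (s2-s1) (v - u) * Rl t (1-s2) v := by
      intro u
      have h := Rl_kernel hd hv2 t u
      rw [show (s2-s1) + (1-s2) = 1 - s1 by ring] at h
      exact h
    have hCS : ∀ u : ℂ, (Rl t (1-s1) u)^2 ≤ ∫⁻ v : ℂ, gk (s2-s1) (v - u) * (Rl t (1-s2) v)^2 := by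
      intro u
      rw [hker u]
      exact lint_CS ((gk_meas (s2-s1)).comp (by fun_prop)) (meas_Rl t (1-s2)) (gk_mass hd u)
    have hmeasF : Measurable (Function.uncurry fun u v : ℂ =>
        gk s1 u * (gk (s2-s1) (v - u) * (Rl t (1-s2) v)^2)) := by
      apply Measurable.mul
      · exact (gk_meas s1).comp (by fun_prop)
      · exact (((gk_meas (s2-s1)).comp (by fun_prop)).mul
          (((meas_Rl t (1-s2)).comp (by fun_prop)).pow_const 2))
    calc ∫⁻ u : ℂ, gk s1 u * (Rl t (1-s1) u)^2
        ≤ ∫⁻ u : ℂ, gk s1 u * ∫⁻ v : ℂ, gk (s2-s1) (v - u) * (Rl t (1-s2) v)^2 :=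
          lintegral_mono fun u => mul_le_mul_right (hCS u) _
      _ = ∫⁻ u : ℂ, ∫⁻ v : ℂ, gk s1 u * (gk (s2-s1) (v - u) * (Rl t (1-s2) v)^2) := by
          refine lintegral_congr fun u => ?_
          rw [lintegral_const_mul' _ _ (gk_ne_top s1 u)]
      _ = ∫⁻ v : ℂ, ∫⁻ u : ℂ, gk s1 u * (gk (s2-s1) (v - u) * (Rl t (1-s2) v)^2) :=
          lintegral_lintegral_swap hmeasF.aemeasurable
      _ = ∫⁻ v : ℂ, gk s2 v * (Rl t (1-s2) v)^2 := by
          refine lintegral_congr fun v => ?_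
          calc ∫⁻ u : ℂ, gk s1 u * (gk (s2-s1) (v - u) * (Rl t (1-s2) v)^2)
              = ∫⁻ u : ℂ, (gk s1 (u - 0) * gk (s2-s1) (v - u)) * (Rl t (1-s2) v)^2 := by
                refine lintegral_congr fun u => ?_
                rw [sub_zero, mul_assoc]
            _ = (∫⁻ u : ℂ, gk s1 (u - 0) * gk (s2-s1) (v - u)) * (Rl t (1-s2) v)^2 :=
                lintegral_mul_const _ (((gk_meas s1).comp (by fun_prop)).mul
                  ((gk_meas (s2-s1)).comp (by fun_prop)))
            _ = gk s2 v * (Rl t (1-s2) v)^2 := by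
                rw [gk_conv hs1pos hd 0 v, show s1 + (s2-s1) = s2 by ring, sub_zero]

lemma cg_cont (ρ : ℂ) : Continuous fun z : ℂ × ℂ => cgDensity ρ z := by
  unfold cgDensity
  continuity

lemma meas_cg (ρ : ℂ) : Measurable fun z : ℂ × ℂ => ENNReal.ofReal (cgDensity ρ z) :=
  (cg_cont ρ).measurable.ennreal_ofReal

lemma cg_nonneg {ρ : ℂ} (h : ‖ρ‖ < 1) (z : ℂ × ℂ) : 0 ≤ cgDensity ρ z := by
  have h1 : 0 < 1 - ‖ρ‖^2 := by nlinarith [norm_nonneg ρ]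
  have h2 : 0 < π^2 * (1 - ‖ρ‖^2) := by positivity
  exact mul_nonneg (le_of_lt (div_pos one_pos h2)) (Real.exp_pos _).le

lemma jointCDF_eq {ρ : ℂ} (h : ‖ρ‖ < 1) (t : ℝ) :
    jointCDF ρ t
      = (∫⁻ z in (Dset t) ×ˢ (Dset t), ENNReal.ofReal (cgDensity ρ z)).toReal := by
  unfold jointCDF
  have hset : {p : ℂ × ℂ | ‖p.1‖^2 ≤ t ∧ ‖p.2‖^2 ≤ t}
      = (Dset t) ×ˢ (Dset t) := rfl
  rw [hset, integral_eq_lintegral_of_nonneg_ae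
    (Filter.Eventually.of_forall fun z => cg_nonneg h z)
    (cg_cont ρ).aestronglyMeasurable]

lemma L_ne_top {ρ : ℂ} (h : ‖ρ‖ < 1) (t : ℝ) :
    ∫⁻ z in (Dset t) ×ˢ (Dset t), ENNReal.ofReal (cgDensity ρ z) ≠ ⊤ := by
  have h1 : 0 < 1 - ‖ρ‖^2 := by nlinarith [norm_nonneg ρ]
  have hbd : ∀ z : ℂ × ℂ, cgDensity ρ z ≤ 1 / (π^2 * (1 - ‖ρ‖^2)) := by
    intro z
    have hQ : 0 ≤ ‖z.1‖^2 + ‖z.2‖^2 -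
        2 * ((starRingEnd ℂ) ρ * z.1 * (starRingEnd ℂ) z.2).re := by
      have hre := Complex.re_le_norm ((starRingEnd ℂ) ρ * z.1 * (starRingEnd ℂ) z.2)
      have habs : ‖(starRingEnd ℂ) ρ * z.1 * (starRingEnd ℂ) z.2‖
          = ‖ρ‖ * ‖z.1‖ * ‖z.2‖ := by
        simp [map_mul]
      rw [habs] at hre
      nlinarith [sq_nonneg (‖z.1‖ - ‖z.2‖), norm_nonneg ρ,
        norm_nonneg z.1, norm_nonneg z.2,
        mul_nonneg (norm_nonneg z.1) (norm_nonneg z.2)]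
    have hexp : rexp (-((‖z.1‖^2 + ‖z.2‖^2 -
        2 * ((starRingEnd ℂ) ρ * z.1 * (starRingEnd ℂ) z.2).re) /
          (1 - ‖ρ‖^2))) ≤ 1 := by
      rw [Real.exp_le_one_iff, neg_nonpos]
      exact div_nonneg hQ h1.le
    calc cgDensity ρ z ≤ (1 / (π^2 * (1 - ‖ρ‖^2))) * 1 := by
          unfold cgDensity
          apply mul_le_mul_of_nonneg_left hexp
          positivity
      _ = 1 / (π^2 * (1 - ‖ρ‖^2)) := mul_one _
  have hDsub : Dset t ⊆ Metric.closedBall (0:ℂ) (Real.sqrt t) := by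
    intro z hz
    rw [Metric.mem_closedBall, dist_zero_right]
    rcases le_or_gt 0 t with ht | ht
    · exact (Real.le_sqrt (norm_nonneg z) ht).mpr hz
    · exact absurd hz (not_le.mpr (lt_of_lt_of_le ht (by positivity)))
  have hvol : volume ((Dset t) ×ˢ (Dset t)) < ⊤ := by
    calc volume ((Dset t) ×ˢ (Dset t))
        ≤ volume ((Metric.closedBall (0:ℂ) (Real.sqrt t)) ×ˢ
            (Metric.closedBall (0:ℂ) (Real.sqrt t))) :=
          measure_mono (Set.prod_mono hDsub hDsub)
      _ = volume (Metric.closedBall (0:ℂ) (Real.sqrt t))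
            * volume (Metric.closedBall (0:ℂ) (Real.sqrt t)) := by
          rw [Measure.volume_eq_prod ℂ ℂ, Measure.prod_prod]
      _ < ⊤ := ENNReal.mul_lt_top measure_closedBall_lt_top measure_closedBall_lt_top
  have : ∫⁻ z in (Dset t) ×ˢ (Dset t), ENNReal.ofReal (cgDensity ρ z)
      ≤ ENNReal.ofReal (1 / (π^2 * (1 - ‖ρ‖^2))) * volume ((Dset t) ×ˢ (Dset t)) := by
    calc ∫⁻ z in (Dset t) ×ˢ (Dset t), ENNReal.ofReal (cgDensity ρ z)
        ≤ ∫⁻ _ in (Dset t) ×ˢ (Dset t), ENNReal.ofReal (1 / (π^2 * (1 - ‖ρ‖^2))) :=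
          lintegral_mono fun z => ENNReal.ofReal_le_ofReal (hbd z)
      _ = _ := by rw [setLIntegral_const]
  exact ne_top_of_le_ne_top (ENNReal.mul_ne_top ofReal_ne_top hvol.ne) this

lemma L_rot (ρ : ℂ) (t : ℝ) :
    ∫⁻ z in (Dset t) ×ˢ (Dset t), ENNReal.ofReal (cgDensity ρ z)
      = ∫⁻ z in (Dset t) ×ˢ (Dset t),
          ENNReal.ofReal (cgDensity ((‖ρ‖ : ℝ):ℂ) z) := by
  by_cases hρ : ρ = 0
  · subst hρ
    norm_num
  · set s : ℝ := ‖ρ‖ with hs_def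
    have hs : 0 < s := norm_pos_iff.mpr hρ
    set u : ℂ := ρ / (s:ℂ) with hu_def
    have hρ_eq : ρ = u * (s:ℂ) := by
      rw [hu_def, div_mul_cancel₀]
      exact_mod_cast hs.ne'
    have hu : ‖u‖ = 1 := by
      rw [hu_def, norm_div, Complex.norm_real, Real.norm_of_nonneg hs.le, div_self hs.ne']
    have hu_mem : u ∈ Metric.sphere (0:ℂ) 1 := by
      rwa [mem_sphere_zero_iff_norm]
    set cu : Circle := ⟨u, hu_mem⟩ with hcu_def
    set T : ℂ ≃ₗᵢ[ℝ] ℂ := rotation cu with hT_def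
    have hT_apply : ∀ z : ℂ, T z = u * z := fun z => rotation_apply cu z
    have mpT : MeasurePreserving T volume volume := T.measurePreserving
    have mp2 : MeasurePreserving (Prod.map (id : ℂ → ℂ) T)
        ((volume : Measure ℂ).prod volume) ((volume : Measure ℂ).prod volume) :=
      (MeasurePreserving.id volume).prod mpT
    have hSmem : ∀ z : ℂ × ℂ, Prod.map (id : ℂ → ℂ) T z ∈ (Dset t) ×ˢ (Dset t)
        ↔ z ∈ (Dset t) ×ˢ (Dset t) := by
      intro z
      simp only [Set.mem_prod, Prod.map, id]
      constructor <;> intro hz <;> refine ⟨hz.1, ?_⟩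
      · have := hz.2
        simpa [Dset, hT_apply, map_mul, hu] using this
      · have := hz.2
        simpa [Dset, hT_apply, map_mul, hu] using this
    have hcg : ∀ z : ℂ × ℂ, cgDensity ((s:ℝ):ℂ) (Prod.map (id : ℂ → ℂ) T z)
        = cgDensity ρ z := by
      intro z
      have habs : ‖((s:ℝ):ℂ)‖ = ‖ρ‖ := by
        rw [Complex.norm_real, Real.norm_of_nonneg hs.le]
      have habs2 : ‖u * z.2‖ = ‖z.2‖ := by
        rw [norm_mul, hu, one_mul]
      have hcross : (starRingEnd ℂ) ((s:ℝ):ℂ) * z.1 * (starRingEnd ℂ) (u * z.2)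
          = (starRingEnd ℂ) ρ * z.1 * (starRingEnd ℂ) z.2 := by
        rw [hρ_eq, map_mul, map_mul, Complex.conj_ofReal]
        ring
      unfold cgDensity
      simp only [Prod.map, id_eq, hT_apply]
      rw [habs2, hcross, habs]
    have hS : MeasurableSet ((Dset t) ×ˢ (Dset t)) :=
      (measurableSet_Dset t).prod (measurableSet_Dset t)
    calc ∫⁻ z in (Dset t) ×ˢ (Dset t), ENNReal.ofReal (cgDensity ρ z)
        = ∫⁻ z : ℂ × ℂ, ((Dset t) ×ˢ (Dset t)).indicator
            (fun z => ENNReal.ofReal (cgDensity ρ z)) z := (lintegral_indicator hS _).symm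
      _ = ∫⁻ z : ℂ × ℂ, ((Dset t) ×ˢ (Dset t)).indicator
            (fun z => ENNReal.ofReal (cgDensity ((s:ℝ):ℂ) z)) (Prod.map (id : ℂ → ℂ) T z) := by
          refine lintegral_congr fun z => ?_
          by_cases hz : z ∈ (Dset t) ×ˢ (Dset t)
          · rw [Set.indicator_of_mem hz, Set.indicator_of_mem ((hSmem z).mpr hz), hcg z]
          · rw [Set.indicator_of_notMem hz,
              Set.indicator_of_notMem (fun h => hz ((hSmem z).mp h))]
      _ = ∫⁻ z : ℂ × ℂ, ((Dset t) ×ˢ (Dset t)).indicator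
            (fun z => ENNReal.ofReal (cgDensity ((s:ℝ):ℂ) z)) z := by
          rw [Measure.volume_eq_prod ℂ ℂ]
          exact mp2.lintegral_comp ((meas_cg _).indicator hS)
      _ = ∫⁻ z in (Dset t) ×ˢ (Dset t), ENNReal.ofReal (cgDensity ((s:ℝ):ℂ) z) :=
          lintegral_indicator hS _


end Aux

/-- Bivariate Rayleigh monotonicity: for each fixed `t > 0`, the joint CDF
`P(|g₁|² ≤ t, |g₂|² ≤ t)` is nondecreasing in the power correlation `|ρ|²`
(for `0 ≤ |ρ| < 1`). -/
theorem stmt19 (t : ℝ) (ht : 0 < t) (ρ₁ ρ₂ : ℂ)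
    (h1 : ‖ρ₁‖ < 1) (h2 : ‖ρ₂‖ < 1)
    (hle : ‖ρ₁‖^2 ≤ ‖ρ₂‖^2) :
    jointCDF ρ₁ t ≤ jointCDF ρ₂ t := by
  have h12 : ‖ρ₁‖ ≤ ‖ρ₂‖ := by
    have h := Real.sqrt_le_sqrt hle
    rwa [Real.sqrt_sq (norm_nonneg ρ₁), Real.sqrt_sq (norm_nonneg ρ₂)] at h
  have key : ∫⁻ z in (Dset t) ×ˢ (Dset t), ENNReal.ofReal (cgDensity ρ₁ z)
      ≤ ∫⁻ z in (Dset t) ×ˢ (Dset t), ENNReal.ofReal (cgDensity ρ₂ z) := by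
    rw [L_rot ρ₁ t, L_rot ρ₂ t]
    exact L_mono t (norm_nonneg ρ₁) h12 h2
  rw [jointCDF_eq h1 t, jointCDF_eq h2 t]
  exact ENNReal.toReal_mono (L_ne_top h2 t) key
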